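/- Let N ≥ 1 and n ≥ 1. For all words w, v ∈ W_n^{(N)}, dsw(w, v) ≤ (1/2)·N²·n²·ρ∞(w, v), where dsw(w, v) is the minimal number of interchanges of two neighboring letters needed to transform w into v. -/

import Mathlib

/-- `v` is obtained from `w` by a single swap, i.e. an interchange of two neighboring
letters. -/
def AdjSwap {α : Type*} (w v : List α) : Prop :=
  ∃ (l₁ l₂ : List α) (a b : α), w = l₁ ++ a :: b :: l₂ ∧ v = l₁ ++ b :: a :: l₂

/-- The swap distance `dsw(w, v)`: the minimal number of interchanges of two neighboring
letters needed to transform the word `w` into the word `v`. -/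
noncomputable def dsw {α : Type*} (w v : List α) : ℕ :=
  sInf {k | ∃ f : ℕ → List α, f 0 = w ∧ f k = v ∧ ∀ i < k, AdjSwap (f i) (f (i + 1))}

/-- `ρ∞(w, v) = (2/n)·max_{1 ≤ k ≤ N, 1 ≤ j ≤ N·n} |w_{A_k}[j] − v_{A_k}[j]|` for words
`w, v` in the `N` letters `A₁, …, A_N` (encoded as elements of `Fin N`), where
`w_{A_k}[j] = (w.take j).count k` is the number of occurrences of `A_k` among the first
`j` letters. -/
noncomputable def rhoInfN (N n : ℕ) (w v : List (Fin N)) : ℝ :=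
  (2 / (n : ℝ)) * (((Finset.Icc 1 (N * n)) ×ˢ (Finset.univ : Finset (Fin N))).sup fun p =>
    (((w.take p.1).count p.2 : ℤ) - ((v.take p.1).count p.2 : ℤ)).natAbs : ℕ)

def Reach {α : Type*} (k : ℕ) (w v : List α) : Prop :=
  ∃ f : ℕ → List α, f 0 = w ∧ f k = v ∧ ∀ i < k, AdjSwap (f i) (f (i + 1))

lemma reach_refl {α : Type*} (w : List α) : Reach 0 w w :=
  ⟨fun _ => w, rfl, rfl, fun i hi => by omega⟩

lemma dsw_le_of_reach {α : Type*} {k : ℕ} {w v : List α} (h : Reach k w v) : dsw w v ≤ k :=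
  Nat.sInf_le h

lemma reach_trans {α : Type*} {k₁ k₂ : ℕ} {w u v : List α}
    (h₁ : Reach k₁ w u) (h₂ : Reach k₂ u v) : Reach (k₁ + k₂) w v := by
  obtain ⟨f₁, hf0, hf1, hfs⟩ := h₁
  obtain ⟨f₂, hg0, hg1, hgs⟩ := h₂
  refine ⟨fun i => if i ≤ k₁ then f₁ i else f₂ (i - k₁), by simp [hf0], ?_, ?_⟩
  · by_cases h : k₁ + k₂ ≤ k₁
    · have hk2 : k₂ = 0 := by omega
      simp only [if_pos h]
      have : k₁ + k₂ = k₁ := by omega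
      rw [this, hf1, ← hg0, ← hg1, hk2]
    · simp only [if_neg h]
      have : k₁ + k₂ - k₁ = k₂ := by omega
      rw [this, hg1]
  · intro i hi
    by_cases h1 : i + 1 ≤ k₁
    · simp only [if_pos (by omega : i ≤ k₁), if_pos h1]
      exact hfs i (by omega)
    · by_cases h2 : i ≤ k₁
      · have : i = k₁ := by omega
        subst this
        simp only [if_pos le_rfl, if_neg h1, hf1, ← hg0]
        have : i + 1 - i = 1 := by omega
        rw [this]
        exact hgs 0 (by omega)
      · simp only [if_neg h2, if_neg h1]
        have : i + 1 - k₁ = (i - k₁) + 1 := by omega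
        rw [this]
        exact hgs (i - k₁) (by omega)

lemma reach_cons {α : Type*} {k : ℕ} {x y : List α} (a : α) (h : Reach k x y) :
    Reach k (a :: x) (a :: y) := by
  obtain ⟨f, h0, h1, hs⟩ := h
  refine ⟨fun i => a :: f i, by simp [h0], by simp [h1], fun i hi => ?_⟩
  obtain ⟨l₁, l₂, b, c, hb, hc⟩ := hs i hi
  exact ⟨a :: l₁, l₂, b, c, by simp [hb], by simp [hc]⟩

lemma reach_one {α : Type*} {w v : List α} (h : AdjSwap w v) : Reach 1 w v :=
  ⟨fun i => if i = 0 then w else v, by simp, by simp, fun i hi => by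
    have : i = 0 := by omega
    simp [this, h]⟩

lemma reach_bubble {α : Type*} (A : List α) (c : α) (X : List α) :
    Reach A.length (A ++ c :: X) (c :: (A ++ X)) := by
  induction A with
  | nil => exact reach_refl _
  | cons a A ih =>
    have h1 : Reach A.length (a :: (A ++ c :: X)) (a :: c :: (A ++ X)) := reach_cons a ih
    have h2 : Reach 1 (a :: c :: (A ++ X)) (c :: a :: (A ++ X)) :=
      reach_one ⟨[], A ++ X, a, c, rfl, rfl⟩
    simpa using reach_trans h1 h2



def gForm {α : Type*} [DecidableEq α] (k : α) (x y : List α) : ℕ :=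
  ∑ j ∈ Finset.range x.length,
    (((x.take (j+1)).count k : ℤ) - ((y.take (j+1)).count k : ℤ)).natAbs

lemma count_take_append_left {α : Type*} [DecidableEq α] {c : α} {A : List α} (hA : c ∉ A)
    (B : List α) {m : ℕ} (hm : m ≤ A.length) : ((A ++ B).take m).count c = 0 := by
  rw [List.take_append, List.count_append]
  have h1 : ((A.take m).count c) ≤ A.count c := (List.take_sublist m A).count_le c
  have h2 : A.count c = 0 := List.count_eq_zero.mpr hA
  have h3 : m - A.length = 0 := by omega
  simp [h3]
  omega

lemma count_take_append_right {α : Type*} [DecidableEq α] (c : α) (A B : List α) {m : ℕ}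
    (hm : A.length ≤ m) : ((A ++ B).take m).count c = A.count c + (B.take (m - A.length)).count c := by
  rw [List.take_append, List.count_append, List.take_of_length_le hm]

lemma gForm_step {α : Type*} [DecidableEq α] {c : α} (A X Y : List α) (hA : c ∉ A) :
    gForm c (A ++ c :: X) (c :: Y) = A.length + gForm c (A ++ X) Y := by
  have hcA : A.count c = 0 := List.count_eq_zero.mpr hA
  have hlen1 : (A ++ c :: X).length = A.length + (1 + X.length) := by simp; omega
  have hlen2 : (A ++ X).length = A.length + X.length := by simp
  -- y-side counts
  have hy : ∀ j : ℕ, ((c :: Y).take (j+1)).count c = 1 + (Y.take j).count c := by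
    intro j
    rw [List.take_succ_cons, List.count_cons_self]
    omega
  rw [gForm, gForm, hlen1, hlen2, Finset.sum_range_add, Finset.sum_range_add,
    Finset.sum_range_add]
  -- the three pieces
  have e1 : ∀ j ∈ Finset.range A.length,
      ((((A ++ c :: X).take (j+1)).count c : ℤ) - (((c :: Y).take (j+1)).count c : ℤ)).natAbs
      = 1 + (Y.take j).count c := by
    intro j hj
    rw [Finset.mem_range] at hj
    rw [count_take_append_left hA _ (by omega), hy]
    push_cast
    omega
  have e2 : ∀ i ∈ Finset.range 1,
      ((((A ++ c :: X).take (A.length + i + 1)).count c : ℤ)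
        - (((c :: Y).take (A.length + i + 1)).count c : ℤ)).natAbs
      = (Y.take A.length).count c := by
    intro i hi
    rw [Finset.mem_range] at hi
    have : i = 0 := by omega
    subst this
    rw [count_take_append_right c A (c :: X) (by omega), hy]
    have : A.length + 0 + 1 - A.length = 1 := by omega
    have h1 : (c :: X).take 1 = [c] := rfl
    have h2 : List.count c [c] = 1 := by simp
    rw [this, h1, h2, hcA]
    push_cast
    omega
  have e3 : ∀ i : ℕ,
      ((((A ++ c :: X).take (A.length + (1 + i) + 1)).count c : ℤ)
        - (((c :: Y).take (A.length + (1 + i) + 1)).count c : ℤ)).natAbs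
      = ((((A ++ X).take (A.length + i + 1)).count c : ℤ)
        - ((Y.take (A.length + i + 1)).count c : ℤ)).natAbs := by
    intro i
    rw [count_take_append_right c A (c :: X) (by omega),
      count_take_append_right c A X (by omega), hy]
    have h1 : A.length + (1 + i) + 1 - A.length = (i + 1) + 1 := by omega
    have h2 : A.length + i + 1 - A.length = i + 1 := by omega
    rw [h1, h2, List.take_succ_cons, List.count_cons_self]
    have : A.length + (1 + i) = A.length + i + 1 := by omega
    rw [this]
    push_cast
    omega
  have e4 : ∀ j ∈ Finset.range A.length,
      ((((A ++ X).take (j+1)).count c : ℤ) - ((Y.take (j+1)).count c : ℤ)).natAbs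
      = (Y.take (j+1)).count c := by
    intro j hj
    rw [Finset.mem_range] at hj
    rw [count_take_append_left hA _ (by omega)]
    push_cast
    omega
  rw [Finset.sum_congr rfl e1, Finset.sum_congr rfl e2,
    Finset.sum_congr rfl (fun i _ => e3 i), Finset.sum_congr rfl e4]
  simp only [Finset.sum_range_one, Finset.sum_add_distrib, Finset.sum_const,
    Finset.card_range, smul_eq_mul, mul_one]
  -- now: A.length*1-ish + Σ_{j<a} Y_c[j] + Y_c[a] + S = a + Σ_{j<a} Y_c[j+1] + S
  have key : ∑ j ∈ Finset.range A.length, (Y.take j).count c + (Y.take A.length).count c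
      = ∑ j ∈ Finset.range A.length, (Y.take (j+1)).count c := by
    rw [← Finset.sum_range_succ (fun j => (Y.take j).count c) A.length,
      Finset.sum_range_succ' (fun j => (Y.take j).count c) A.length]
    simp
  omega

lemma count_two_of_mem {α : Type*} [DecidableEq α] {k l : α} (hkl : k ≠ l) {z : List α}
    (hz : ∀ a ∈ z, a = k ∨ a = l) : z.count k + z.count l = z.length := by
  induction z with
  | nil => simp
  | cons a t ih =>
    have ht := ih (fun b hb => hz b (List.mem_cons_of_mem a hb))
    rcases hz a (List.mem_cons_self (a := a) (l := t)) with h | h <;> subst h <;>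
      simp [List.count_cons, hkl, Ne.symm hkl] <;> omega

lemma gForm_symm {α : Type*} [DecidableEq α] {k l : α} (hkl : k ≠ l) {x y : List α}
    (hx : ∀ a ∈ x, a = k ∨ a = l) (hy : ∀ a ∈ y, a = k ∨ a = l)
    (hlen : x.length ≤ y.length) : gForm k x y = gForm l x y := by
  apply Finset.sum_congr rfl
  intro j hj
  rw [Finset.mem_range] at hj
  have hx1 : (x.take (j+1)).count k + (x.take (j+1)).count l = j + 1 := by
    rw [count_two_of_mem hkl (fun a ha => hx a (List.mem_of_mem_take ha)),
      List.length_take]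
    omega
  have hy1 : (y.take (j+1)).count k + (y.take (j+1)).count l = j + 1 := by
    rw [count_two_of_mem hkl (fun a ha => hy a (List.mem_of_mem_take ha)),
      List.length_take]
    omega
  omega

def pp {α : Type*} [DecidableEq α] (k l : α) : α → Bool := fun z => decide (z = k ∨ z = l)

def gPair {α : Type*} [DecidableEq α] (k l : α) (w v : List α) : ℕ :=
  gForm k (w.filter (pp k l)) (v.filter (pp k l))

def Phi {α : Type*} [DecidableEq α] [Fintype α] (w v : List α) : ℕ :=
  ∑ q ∈ Finset.univ.offDiag, gPair q.1 q.2 w v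

lemma countP_pp {α : Type*} [DecidableEq α] {k l : α} (hkl : k ≠ l) (x : List α) :
    x.countP (pp k l) = x.count k + x.count l := by
  induction x with
  | nil => simp
  | cons a t ih =>
    rw [List.countP_cons, List.count_cons, List.count_cons, ih]
    by_cases h1 : a = k
    · simp only [pp, h1]
      have : ¬(k = l) := hkl
      simp [this]
      omega
    · by_cases h2 : a = l
      · simp only [pp, h1, h2]
        have : ¬(l = k) := fun h => hkl h.symm
        simp [this]
        omega
      · simp [pp, h1, h2]

lemma mem_pp {α : Type*} [DecidableEq α] {k l : α} {x : List α} :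
    ∀ a ∈ x.filter (pp k l), a = k ∨ a = l := by
  intro a ha
  have := List.of_mem_filter ha
  simpa [pp] using this

lemma filter_length_eq_of_perm {α : Type*} [DecidableEq α] {k l : α} (hkl : k ≠ l)
    {w v : List α} (hp : w.Perm v) :
    (w.filter (pp k l)).length = (v.filter (pp k l)).length := by
  rw [← List.countP_eq_length_filter, ← List.countP_eq_length_filter,
    countP_pp hkl, countP_pp hkl, hp.count_eq, hp.count_eq]

/-- Per-pair step inequality (in fact used as `≥`). -/
lemma gPair_step {α : Type*} [DecidableEq α] {k l : α} (hkl : k ≠ l) {c : α}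
    {A X v' : List α} (hA : c ∉ A) (hperm : (A ++ c :: X).Perm (c :: v')) :
    ((if k = c then A.count l else 0) + (if l = c then A.count k else 0))
      + gPair k l (A ++ X) v' ≤ gPair k l (A ++ c :: X) (c :: v') := by
  have hpermAX : (A ++ X).Perm v' := by
    have h1 : (A ++ c :: X).Perm (c :: (A ++ X)) := List.perm_middle
    exact (h1.symm.trans hperm).cons_inv
  have hcA0 : A.count c = 0 := List.count_eq_zero.mpr hA
  by_cases hk : k = c
  · subst hk
    have hlc : ¬(l = k) := fun h => hkl h.symm
    simp only [if_pos rfl, if_neg hlc, add_zero]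
    -- filter computations
    have hfw : (A ++ k :: X).filter (pp k l) =
        (A.filter (pp k l)) ++ k :: (X.filter (pp k l)) := by
      simp [List.filter_append, pp]
    have hfw' : (A ++ X).filter (pp k l) = (A.filter (pp k l)) ++ (X.filter (pp k l)) := by
      simp [List.filter_append]
    have hfv : (k :: v').filter (pp k l) = k :: (v'.filter (pp k l)) := by
      simp [pp]
    have hkAf : k ∉ A.filter (pp k l) := fun h => hA (List.mem_of_mem_filter h)
    have hAflen : (A.filter (pp k l)).length = A.count l := by
      rw [← List.countP_eq_length_filter, countP_pp hkl, hcA0]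
      omega
    rw [gPair, gPair, hfw, hfv, hfw', gForm_step _ _ _ hkAf, hAflen]
    simp
  · by_cases hl : l = c
    · subst hl
      simp only [if_neg hk, if_pos rfl, zero_add]
      have hfw : (A ++ l :: X).filter (pp k l) =
          (A.filter (pp k l)) ++ l :: (X.filter (pp k l)) := by
        simp [List.filter_append, pp]
      have hfw' : (A ++ X).filter (pp k l) = (A.filter (pp k l)) ++ (X.filter (pp k l)) := by
        simp [List.filter_append]
      have hfv : (l :: v').filter (pp k l) = l :: (v'.filter (pp k l)) := by
        simp [pp]
      have hlAf : l ∉ A.filter (pp k l) := fun h => hA (List.mem_of_mem_filter h)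
      have hAflen : (A.filter (pp k l)).length = A.count k := by
        rw [← List.countP_eq_length_filter, countP_pp hkl, hcA0]
        omega
      have hsym1 : gPair k l (A ++ l :: X) (l :: v') = gForm l ((A ++ l :: X).filter (pp k l))
          ((l :: v').filter (pp k l)) := by
        rw [gPair]
        exact gForm_symm hkl mem_pp mem_pp (le_of_eq (filter_length_eq_of_perm hkl hperm))
      have hsym2 : gPair k l (A ++ X) v' = gForm l ((A ++ X).filter (pp k l))
          ((v').filter (pp k l)) := by
        rw [gPair]
        exact gForm_symm hkl mem_pp mem_pp (le_of_eq (filter_length_eq_of_perm hkl hpermAX))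
      rw [hsym1, hsym2, hfw, hfv, hfw', gForm_step _ _ _ hlAf, hAflen]
      simp
    · -- c is neither k nor l : nothing changes
      simp only [if_neg hk, if_neg hl, add_zero, zero_add]
      have hpc : pp k l c = false := by
        simp [pp]
        exact ⟨fun h => hk h.symm, fun h => hl h.symm⟩
      have hfw : (A ++ c :: X).filter (pp k l) = (A ++ X).filter (pp k l) := by
        simp [List.filter_append, hpc]
      have hfv : (c :: v').filter (pp k l) = v'.filter (pp k l) := by
        simp [hpc]
      rw [gPair, gPair, hfw, hfv]

lemma sum_count_univ {α : Type*} [DecidableEq α] [Fintype α] (A : List α) :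
    ∑ a : α, A.count a = A.length := by
  induction A with
  | nil => simp
  | cons a t ih =>
    simp only [List.count_cons, List.length_cons, Finset.sum_add_distrib, ih]
    simp

lemma Phi_step {α : Type*} [DecidableEq α] [Fintype α] {c : α} {A X v' : List α}
    (hA : c ∉ A) (hperm : (A ++ c :: X).Perm (c :: v')) :
    2 * A.length + Phi (A ++ X) v' ≤ Phi (A ++ c :: X) (c :: v') := by
  have hstep : ∀ q ∈ Finset.univ.offDiag (α := α),
      ((if q.1 = c then A.count q.2 else 0) + (if q.2 = c then A.count q.1 else 0))
        + gPair q.1 q.2 (A ++ X) v' ≤ gPair q.1 q.2 (A ++ c :: X) (c :: v') := by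
    intro q hq
    have hne : q.1 ≠ q.2 := (Finset.mem_offDiag.mp hq).2.2
    exact gPair_step hne hA hperm
  have h1 : ∑ q ∈ Finset.univ.offDiag (α := α),
      (((if q.1 = c then A.count q.2 else 0) + (if q.2 = c then A.count q.1 else 0))
        + gPair q.1 q.2 (A ++ X) v') ≤ Phi (A ++ c :: X) (c :: v') :=
    Finset.sum_le_sum hstep
  rw [Finset.sum_add_distrib] at h1
  have h2 : ∑ q ∈ Finset.univ.offDiag (α := α),
      ((if q.1 = c then A.count q.2 else 0) + (if q.2 = c then A.count q.1 else 0))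
      = 2 * A.length := by
    have hcA0 : A.count c = 0 := List.count_eq_zero.mpr hA
    rw [Finset.sum_subset (fun x hx => Finset.mem_product.mpr
        ⟨(Finset.mem_offDiag.mp hx).1, (Finset.mem_offDiag.mp hx).2.1⟩)]
    · rw [Finset.sum_product]
      dsimp only
      have : ∀ k : α, (∑ l : α, ((if k = c then A.count l else 0)
          + (if l = c then A.count k else 0)))
          = (if k = c then A.length else 0) + A.count k := by
        intro k
        rw [Finset.sum_add_distrib]
        congr 1
        · by_cases hk : k = c
          · simp [hk, sum_count_univ]
          · simp [hk]
        · simp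
      rw [Finset.sum_congr rfl (fun k _ => this k), Finset.sum_add_distrib, sum_count_univ]
      simp [hcA0]
      omega
    · intro q hq hnq
      have : q.1 = q.2 := by
        by_contra hne
        exact hnq (Finset.mem_offDiag.mpr ⟨Finset.mem_univ _, Finset.mem_univ _, hne⟩)
      by_cases h : q.1 = c
      · simp [h, ← this, h ▸ hcA0]
        omega
      · have h2 : ¬(q.2 = c) := fun hh => h (this ▸ hh)
        simp [h, h2]
  simp only [Phi] at h1 ⊢
  omega

lemma count_take_le_count_take {α : Type*} [DecidableEq α] (x : List α) (k : α) {i₁ i₂ : ℕ}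
    (h : i₁ ≤ i₂) : (x.take i₁).count k ≤ (x.take i₂).count k ∧
      (x.take i₂).count k ≤ (x.take i₁).count k + (i₂ - i₁) := by
  have hx : x.take i₂ = x.take i₁ ++ (x.drop i₁).take (i₂ - i₁) := by
    rw [← List.take_add]
    congr 1
    omega
  rw [hx, List.count_append]
  constructor
  · omega
  · have := List.count_le_length (a := k) (l := ((x.drop i₁).take (i₂ - i₁)))
    have := List.length_take (i := i₂ - i₁) (l := x.drop i₁)
    omega

lemma exists_take_countP {α : Type*} (x : List α) (q : α → Bool) :
    ∀ m ≤ x.countP q, ∃ j ≤ x.length, (x.take j).countP q = m := by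
  induction x with
  | nil => intro m hm; simp_all
  | cons a t ih =>
    intro m hm
    rcases Nat.eq_zero_or_pos m with hm0 | hmp
    · exact ⟨0, by simp, by simp [hm0]⟩
    · by_cases hq : q a
      · obtain ⟨j, hj, hjv⟩ := ih (m - 1) (by rw [List.countP_cons, if_pos hq] at hm; omega)
        exact ⟨j + 1, by simpa using hj,
          by rw [List.take_succ_cons, List.countP_cons, if_pos hq, hjv]; omega⟩
      · obtain ⟨j, hj, hjv⟩ := ih m (by rwa [List.countP_cons, if_neg hq, add_zero] at hm)
        exact ⟨j + 1, by simpa using hj,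
          by rw [List.take_succ_cons, List.countP_cons, if_neg hq, hjv]; omega⟩

lemma filter_take_eq {α : Type*} (x : List α) (q : α → Bool) (j : ℕ) :
    (x.take j).filter q = (x.filter q).take ((x.take j).countP q) := by
  have hpre : (x.take j).filter q <+: x.filter q := (List.take_prefix j x).filter q
  have := List.prefix_iff_eq_take.mp hpre
  rwa [← List.countP_eq_length_filter] at this

lemma key_bound {α : Type*} [DecidableEq α] {w v : List α} {M : ℕ}
    (hM : ∀ j, 1 ≤ j → j ≤ w.length → ∀ k : α,
      (((w.take j).count k : ℤ) - ((v.take j).count k : ℤ)).natAbs ≤ M)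
    {k l : α} (hkl : k ≠ l) {j' : ℕ} (hj'1 : 1 ≤ j')
    (hj'2 : j' ≤ (w.filter (pp k l)).length) :
    ((((w.filter (pp k l)).take j').count k : ℤ)
      - (((v.filter (pp k l)).take j').count k : ℤ)).natAbs ≤ M := by
  obtain ⟨j, hjle, hjv⟩ := exists_take_countP w (pp k l) j'
    (by rwa [List.countP_eq_length_filter])
  have hj1 : 1 ≤ j := by
    rcases Nat.eq_zero_or_pos j with h0 | h
    · subst h0; simp at hjv; omega
    · exact h
  -- w-side identification
  have hwid : (w.filter (pp k l)).take j' = (w.take j).filter (pp k l) := by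
    rw [filter_take_eq, hjv]
  -- v-side
  set s := (v.take j).countP (pp k l) with hs
  have hvid : (v.filter (pp k l)).take s = (v.take j).filter (pp k l) := by
    rw [filter_take_eq]
  -- counts
  have hwk : ((w.filter (pp k l)).take j').count k = (w.take j).count k := by
    rw [hwid, List.count_filter]
    · simp [pp]
  have hvk : ((v.filter (pp k l)).take s).count k = (v.take j).count k := by
    rw [hvid, List.count_filter]
    · simp [pp]
  have hj'sum : (w.take j).count k + (w.take j).count l = j' := by
    rw [← countP_pp hkl, hjv]
  have hssum : (v.take j).count k + (v.take j).count l = s := by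
    rw [← countP_pp hkl]
  have hMk := hM j hj1 hjle k
  have hMl := hM j hj1 hjle l
  -- Lipschitz on the filtered v list between prefix lengths s and j'
  rcases le_total s j' with hle | hle
  · have hlip := count_take_le_count_take (v.filter (pp k l)) k hle
    rw [hvk] at hlip
    omega
  · have hlip := count_take_le_count_take (v.filter (pp k l)) k hle
    rw [hvk] at hlip
    omega


lemma main_induction {α : Type*} [DecidableEq α] [Fintype α] :
    ∀ (v w : List α), w.Perm v → ∃ m, Reach m w v ∧ 2 * m ≤ Phi w v := by
  intro v
  induction v with
  | nil =>
    intro w hp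
    rw [hp.eq_nil]
    exact ⟨0, reach_refl _, by omega⟩
  | cons c v' ih =>
    intro w hp
    have hc : c ∈ w := hp.mem_iff.mpr (List.mem_cons_self (a := c) (l := v'))
    obtain ⟨A, X, hcA, hw, -⟩ := List.exists_erase_eq hc
    subst hw
    have hpermAX : (A ++ X).Perm v' := ((List.perm_middle).symm.trans hp).cons_inv
    obtain ⟨m, hr, hm⟩ := ih (A ++ X) hpermAX
    refine ⟨A.length + m, ?_, ?_⟩
    · exact reach_trans (reach_bubble A c X) (reach_cons c hr)
    · have := Phi_step hcA hp
      omega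

/-- For all words `w, v ∈ W_n^{(N)}` (words of length `N·n` with exactly `n` occurrences
of each of the `N` letters), `dsw(w, v) ≤ (1/2)·N²·n²·ρ∞(w, v)`. -/
theorem dsw_le_rhoInf (N n : ℕ) (hN : 1 ≤ N) (hn : 1 ≤ n) (w v : List (Fin N))
    (hwl : w.length = N * n) (hw : ∀ k : Fin N, w.count k = n)
    (hvl : v.length = N * n) (hv : ∀ k : Fin N, v.count k = n) :
    (dsw w v : ℝ) ≤ (1 / 2) * (N : ℝ) ^ 2 * (n : ℝ) ^ 2 * rhoInfN N n w v := by
  classical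
  set Mn : ℕ := (((Finset.Icc 1 (N * n)) ×ˢ (Finset.univ : Finset (Fin N))).sup fun p =>
    (((w.take p.1).count p.2 : ℤ) - ((v.take p.1).count p.2 : ℤ)).natAbs : ℕ) with hMn
  have hrho : rhoInfN N n w v = (2 / (n : ℝ)) * (Mn : ℝ) := rfl
  -- the sup bounds every prefix-count difference
  have hM : ∀ j, 1 ≤ j → j ≤ w.length → ∀ k : Fin N,
      (((w.take j).count k : ℤ) - ((v.take j).count k : ℤ)).natAbs ≤ Mn := by
    intro j hj1 hj2 k
    apply Finset.le_sup (f := fun p : ℕ × Fin N =>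
      (((w.take p.1).count p.2 : ℤ) - ((v.take p.1).count p.2 : ℤ)).natAbs)
      (b := (j, k))
    rw [Finset.mem_product, Finset.mem_Icc]
    exact ⟨⟨hj1, by omega⟩, Finset.mem_univ k⟩
  -- permutation
  have hperm : w.Perm v := List.perm_iff_count.mpr (fun a => by rw [hw a, hv a])
  obtain ⟨m, hr, hm⟩ := main_induction v w hperm
  have hdsw : dsw w v ≤ m := dsw_le_of_reach hr
  -- bound each pair contribution
  have hpair : ∀ q ∈ (Finset.univ : Finset (Fin N)).offDiag,
      gPair q.1 q.2 w v ≤ 2 * n * Mn := by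
    intro q hq
    have hne : q.1 ≠ q.2 := (Finset.mem_offDiag.mp hq).2.2
    have hlen : (w.filter (pp q.1 q.2)).length = 2 * n := by
      rw [← List.countP_eq_length_filter, countP_pp hne, hw q.1, hw q.2]
      omega
    rw [gPair, gForm, hlen]
    calc ∑ j ∈ Finset.range (2 * n),
        ((((w.filter (pp q.1 q.2)).take (j+1)).count q.1 : ℤ)
          - (((v.filter (pp q.1 q.2)).take (j+1)).count q.1 : ℤ)).natAbs
        ≤ ∑ _j ∈ Finset.range (2 * n), Mn := by
          apply Finset.sum_le_sum
          intro j hj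
          rw [Finset.mem_range] at hj
          exact key_bound hM hne (by omega) (by omega)
      _ = 2 * n * Mn := by
          rw [Finset.sum_const, Finset.card_range, smul_eq_mul]
  have hPhi : Phi w v ≤ (N * N - N) * (2 * n * Mn) := by
    calc Phi w v ≤ ∑ _q ∈ (Finset.univ : Finset (Fin N)).offDiag, 2 * n * Mn :=
        Finset.sum_le_sum hpair
      _ = (N * N - N) * (2 * n * Mn) := by
        rw [Finset.sum_const, smul_eq_mul, Finset.offDiag_card]
        simp
  -- natural number bound : dsw ≤ N*N*n*Mn
  have hkey : dsw w v ≤ N * N * (n * Mn) := by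
    have h1 : (N * N - N) * (2 * n * Mn) ≤ N * N * (2 * n * Mn) :=
      Nat.mul_le_mul_right _ (by omega)
    have h2 : N * N * (2 * n * Mn) = 2 * (N * N * (n * Mn)) := by ring
    omega
  -- pass to the reals
  have hcast : (dsw w v : ℝ) ≤ (N : ℝ) * N * (n * Mn) := by
    have h := Nat.cast_le (α := ℝ) |>.mpr hkey
    push_cast at h
    linarith
  rw [hrho]
  have hne : (n : ℝ) ≠ 0 := by positivity
  have : (1 / 2) * (N : ℝ) ^ 2 * (n : ℝ) ^ 2 * ((2 / (n : ℝ)) * (Mn : ℝ))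
      = (N : ℝ) * N * (n * Mn) := by
    field_simp
  rw [this]
  exact hcast
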